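/- Let K ≥ 1, c > 0, and for each k ∈ {1,…,K} let a_k > 0 and P_k > 0 be real numbers. Define τ*_k = a_k·P_k / Σ_{j=1}^K a_j·P_j. Then Σ_k τ*_k = 1, each τ*_k > 0, and Σ_{k=1}^K τ*_k·[log₂(1 + c) − log₂(1 + c/(1 + a_k·P_k/τ*_k))] = log₂(1 + c) − log₂(1 + c/(1 + Σ_{j=1}^K a_j·P_j)). -/

import Mathlib

/-- Evaluating the TDMA sum rate at the time-slot allocation
`τ*_k = a_k P_k / Σ_j a_j P_j`: the allocation is positive, sums to one, and
yields the sum rate `log₂(1+c) − log₂(1 + c/(1 + Σ_j a_j P_j))`. -/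
theorem tdma_rate_at_optimal_slots (K : ℕ) (hK : 0 < K) (c : ℝ) (hc : 0 < c)
    (a P : Fin K → ℝ) (ha : ∀ k, 0 < a k) (hP : ∀ k, 0 < P k) :
    (∀ k, 0 < a k * P k / ∑ j, a j * P j) ∧
    (∑ k, a k * P k / ∑ j, a j * P j) = 1 ∧
    ∑ k, (a k * P k / ∑ j, a j * P j) *
        (Real.logb 2 (1 + c) -
          Real.logb 2 (1 + c / (1 + a k * P k / (a k * P k / ∑ j, a j * P j)))) =
      Real.logb 2 (1 + c) - Real.logb 2 (1 + c / (1 + ∑ j, a j * P j)) := by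
  have hS : 0 < ∑ j, a j * P j :=
    Finset.sum_pos (fun j _ => mul_pos (ha j) (hP j)) (by simp [Finset.univ_nonempty_iff, Fin.pos_iff_nonempty.mp hK])
  have hpos : ∀ k, 0 < a k * P k / ∑ j, a j * P j :=
    fun k => div_pos (mul_pos (ha k) (hP k)) hS
  have hsum : (∑ k, a k * P k / ∑ j, a j * P j) = 1 := by
    rw [← Finset.sum_div, div_self hS.ne']
  refine ⟨hpos, hsum, ?_⟩
  have hkey : ∀ k : Fin K, a k * P k / (a k * P k / ∑ j, a j * P j) = ∑ j, a j * P j := by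
    intro k
    field_simp
    have h1 := (ha k).ne'
    have h2 := (hP k).ne'
    field_simp
  calc ∑ k, (a k * P k / ∑ j, a j * P j) *
        (Real.logb 2 (1 + c) -
          Real.logb 2 (1 + c / (1 + a k * P k / (a k * P k / ∑ j, a j * P j))))
      = ∑ k, (a k * P k / ∑ j, a j * P j) *
        (Real.logb 2 (1 + c) - Real.logb 2 (1 + c / (1 + ∑ j, a j * P j))) := by
        simp_rw [hkey]
    _ = (∑ k, a k * P k / ∑ j, a j * P j) *
        (Real.logb 2 (1 + c) - Real.logb 2 (1 + c / (1 + ∑ j, a j * P j))) := by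
        rw [Finset.sum_mul]
    _ = _ := by rw [hsum, one_mul]
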